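/- Let 𝔤 be a quadratic Lie algebra, let 𝔭 ⊆ 𝔤 be a coisotropic Lie subalgebra, and let 𝔥 ⊆ 𝔭 be a Lie subalgebra such that 𝔭 = 𝔥 ⊕ 𝔭⊥ as vector spaces. Then: (a) the restriction of the bilinear form of 𝔤 to 𝔥 is nondegenerate, so 𝔥 is itself a quadratic Lie algebra; and (b) the subspace 𝔠 := { (ξ, ξ + μ) : ξ ∈ 𝔥, μ ∈ 𝔭⊥ } is a Lagrangian Lie subalgebra of 𝔥̄⊕𝔤, the direct sum Lie algebra 𝔥⊕𝔤 equipped with the form ⟨(ξ,x),(ξ′,x′)⟩ = −⟨ξ,ξ′⟩ + ⟨x,x′⟩. -/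

import Mathlib

section ProdLie
variable {L M : Type*} [LieRing L] [LieRing M]

instance prodBracket : Bracket (L × M) (L × M) :=
  ⟨fun x y => (⁅x.1, y.1⁆, ⁅x.2, y.2⁆)⟩

instance prodLieRing : LieRing (L × M) where
  add_lie x y z := Prod.ext (add_lie x.1 y.1 z.1) (add_lie x.2 y.2 z.2)
  lie_add x y z := Prod.ext (lie_add x.1 y.1 z.1) (lie_add x.2 y.2 z.2)
  lie_self x := Prod.ext (lie_self x.1) (lie_self x.2)
  leibniz_lie x y z := Prod.ext (leibniz_lie x.1 y.1 z.1) (leibniz_lie x.2 y.2 z.2)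

instance prodLieAlgebra {R : Type*} [CommRing R] [LieAlgebra R L] [LieAlgebra R M] :
    LieAlgebra R (L × M) where
  lie_smul t x y := Prod.ext (lie_smul t x.1 y.1) (lie_smul t x.2 y.2)

end ProdLie

variable {g : Type*} [LieRing g] [LieAlgebra ℝ g]

/-- The inclusion of a Lie subalgebra, as a linear map. -/
noncomputable def hIncl (h : LieSubalgebra ℝ g) : h →ₗ[ℝ] g := h.incl.toLinearMap

/-- The bilinear form of `𝔥̄ ⊕ 𝔤`: `⟨(ξ,x),(ξ′,x′)⟩ = −⟨ξ,ξ′⟩ + ⟨x,x′⟩`. -/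
noncomputable def hBarSumForm (B : LinearMap.BilinForm ℝ g) (h : LieSubalgebra ℝ g) :
    LinearMap.BilinForm ℝ (h × g) :=
  B.compl₁₂ (LinearMap.snd ℝ h g) (LinearMap.snd ℝ h g)
    - B.compl₁₂ ((hIncl h).comp (LinearMap.fst ℝ h g))
        ((hIncl h).comp (LinearMap.fst ℝ h g))

/-- The subspace `𝔠 = { (ξ, ξ + μ) : ξ ∈ 𝔥, μ ∈ 𝔭⊥ } ⊆ 𝔥̄ ⊕ 𝔤`. -/
noncomputable def fissionSub (B : LinearMap.BilinForm ℝ g) (h p : LieSubalgebra ℝ g) :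
    Submodule ℝ (h × g) :=
  (B.orthogonal p.toSubmodule).comap
    (LinearMap.snd ℝ h g - (hIncl h).comp (LinearMap.fst ℝ h g))

/-- Let `𝔤` be a quadratic Lie algebra, `𝔭 ⊆ 𝔤` a coisotropic Lie subalgebra
and `𝔥 ⊆ 𝔭` a Lie subalgebra with `𝔭 = 𝔥 ⊕ 𝔭⊥` as vector spaces.  Then (a) the restriction
of the form to `𝔥` is nondegenerate (so `𝔥` is a quadratic Lie algebra), and (b)
`𝔠 = { (ξ, ξ + μ) : ξ ∈ 𝔥, μ ∈ 𝔭⊥ }` is a Lagrangian Lie subalgebra of `𝔥̄ ⊕ 𝔤`. -/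
theorem fission_coisotropic_lagrangian
    [FiniteDimensional ℝ g]
    (B : LinearMap.BilinForm ℝ g) (hsymm : B.IsSymm) (hnondeg : B.Nondegenerate)
    (hinv : ∀ x y z : g, B ⁅x, y⁆ z + B y ⁅x, z⁆ = 0)
    (p h : LieSubalgebra ℝ g) (hhp : h ≤ p)
    (hcois : B.orthogonal p.toSubmodule ≤ p.toSubmodule)
    (hdisj : Disjoint h.toSubmodule (B.orthogonal p.toSubmodule))
    (hsum : h.toSubmodule ⊔ B.orthogonal p.toSubmodule = p.toSubmodule) :
    -- (a) the restriction of `B` to `𝔥` is nondegenerate,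
    (B.restrict h.toSubmodule).Nondegenerate ∧
    -- (b) `𝔠` is a Lie subalgebra of `𝔥̄ ⊕ 𝔤` (closed under the componentwise bracket),
    (∀ z ∈ fissionSub B h p, ∀ w ∈ fissionSub B h p, ⁅z, w⁆ ∈ fissionSub B h p) ∧
    -- and it is Lagrangian.
    (hBarSumForm B h).orthogonal (fissionSub B h p) = fissionSub B h p := by
  set P := B.orthogonal p.toSubmodule with hP
  -- membership in fissionSub
  have memC : ∀ z : h × g, z ∈ fissionSub B h p ↔ z.2 - (z.1 : g) ∈ P :=
    fun z => Iff.rfl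
  -- form formula
  have formEq : ∀ z w : h × g,
      hBarSumForm B h z w = B z.2 w.2 - B (z.1 : g) (w.1 : g) := by
    intro z w
    simp [hBarSumForm, hIncl, LinearMap.compl₁₂_apply]
  -- orthogonality facts
  have hPzero : ∀ n ∈ p.toSubmodule, ∀ μ ∈ P, B n μ = 0 := fun n hn μ hμ => hμ n hn
  have hPzero' : ∀ n ∈ p.toSubmodule, ∀ μ ∈ P, B μ n = 0 := fun n hn μ hμ => by
    rw [← hsymm.eq n μ]; simpa using hμ n hn
  -- P is an ideal of p
  have hIdeal : ∀ a ∈ p.toSubmodule, ∀ μ ∈ P, ⁅a, μ⁆ ∈ P := by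
    intro a ha μ hμ n hn
    have := hinv a n μ
    have h1 : B ⁅a, n⁆ μ = 0 := hPzero _ (p.lie_mem ha hn) μ hμ
    simpa [h1, LinearMap.BilinForm.IsOrtho] using this
  -- (a) nondegeneracy
  have nda : (B.restrict h.toSubmodule).Nondegenerate := by
    refine (LinearMap.IsRefl.nondegenerate_iff_separatingLeft ?_).2 ?_
    · intro x y hxy
      exact hsymm.isRefl _ _ hxy
    intro ξ hξ
    have hξP : (ξ : g) ∈ P := by
      intro n hn
      rw [← hsum] at hn
      obtain ⟨η, hη, μ, hμ, rfl⟩ := Submodule.mem_sup.mp hn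
      have h1 : B η (ξ : g) = 0 := by
        rw [← hsymm.eq (ξ : g) η]
        simpa using hξ ⟨η, hη⟩
      have h2 : B μ (ξ : g) = 0 := hPzero' _ (hhp ξ.2) μ hμ
      simp [LinearMap.BilinForm.IsOrtho, h1, h2]
    have : (ξ : g) ∈ h.toSubmodule ⊓ P := ⟨ξ.2, hξP⟩
    rw [hdisj.eq_bot] at this
    exact Subtype.ext (by simpa using this)
  refine ⟨nda, ?_, ?_⟩
  · -- (b) closed under bracket
    intro z hz w hw
    rw [memC] at hz hw ⊢
    have key : ⁅z, w⁆.2 - ((⁅z, w⁆.1 : h) : g)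
        = ⁅(z.1 : g), w.2 - w.1⁆ + ⁅z.2 - z.1, (w.1 : g)⁆ + ⁅z.2 - z.1, w.2 - w.1⁆ := by
      show ⁅z.2, w.2⁆ - ⁅(z.1 : g), (w.1 : g)⁆ = _
      simp only [lie_sub, sub_lie]
      abel
    rw [key]
    refine add_mem (add_mem (hIdeal _ (hhp z.1.2) _ hw) ?_) (hIdeal _ (hcois hz) _ hw)
    have e : ⁅z.2 - (z.1 : g), (w.1 : g)⁆ = -⁅(w.1 : g), z.2 - (z.1 : g)⁆ :=
      (lie_skew _ _).symm
    rw [e]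
    exact neg_mem (hIdeal _ (hhp w.1.2) _ hz)
  · -- (c) Lagrangian
    ext z
    constructor
    · intro hz
      rw [memC]
      -- z.2 ∈ p
      have hz2p : z.2 ∈ p.toSubmodule := by
        have : z.2 ∈ B.orthogonal P := by
          intro μ hμ
          have hmem : ((0 : h), μ) ∈ fissionSub B h p := by
            rw [memC]; simpa using hμ
          have h0 : hBarSumForm B h ((0 : h), μ) z = 0 := hz _ hmem
          rw [formEq] at h0
          show B μ z.2 = 0
          simpa using h0
        rwa [hP, LinearMap.BilinForm.orthogonal_orthogonal hnondeg hsymm.isRefl] at this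
      -- B ξ (z.2 - z.1) = 0 for ξ ∈ h
      have horth : ∀ ξ : h, B (ξ : g) (z.2 - (z.1 : g)) = 0 := by
        intro ξ
        have hmem : (ξ, (ξ : g)) ∈ fissionSub B h p := by
          rw [memC]; simp
        have h0 : hBarSumForm B h (ξ, (ξ : g)) z = 0 := hz _ hmem
        rw [formEq] at h0
        simp only [LinearMap.map_sub]
        simpa using h0
      -- decompose z.2 - z.1 ∈ p
      have hdiff : z.2 - (z.1 : g) ∈ p.toSubmodule :=
        sub_mem hz2p (hhp z.1.2)
      rw [← hsum] at hdiff
      obtain ⟨ξ₀, hξ₀, μ₀, hμ₀, hdec⟩ := Submodule.mem_sup.mp hdiff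
      have hξ₀zero : ξ₀ = 0 := by
        have : (⟨ξ₀, hξ₀⟩ : h.toSubmodule) = 0 := by
          apply nda.1
          intro η
          have h1 : B (η : g) ξ₀ = 0 := by
            have h2 : B (η : g) μ₀ = 0 := hPzero _ (hhp η.2) μ₀ hμ₀
            have h3 := horth η
            rw [← hdec] at h3
            simp only [map_add] at h3
            linarith [h3]
          rw [← hsymm.eq ξ₀ (η : g)] at h1
          simpa using h1
        simpa using congrArg Subtype.val this
      rw [← hdec, hξ₀zero, zero_add]
      exact hμ₀
    · intro hz w hw
      rw [memC] at hz hw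
      show hBarSumForm B h w z = 0
      rw [formEq]
      have e1 : (w.1 : g) + (w.2 - (w.1 : g)) = w.2 := by abel
      have e2 : (z.1 : g) + (z.2 - (z.1 : g)) = z.2 := by abel
      rw [← e1, ← e2]
      simp only [map_add, LinearMap.add_apply]
      have a1 : B (w.1 : g) (z.2 - (z.1 : g)) = 0 := hPzero _ (hhp w.1.2) _ hz
      have a2 : B (w.2 - (w.1 : g)) (z.1 : g) = 0 := hPzero' _ (hhp z.1.2) _ hw
      have a3 : B (w.2 - (w.1 : g)) (z.2 - (z.1 : g)) = 0 := hPzero _ (hcois hw) _ hz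
      rw [a1, a2, a3]
      ring
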